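/- Let V_0(y)=y₁y and V_2(y)=y₂+(1-y₂)y with (y₁,y₂) ∈ B = {(y₁,y₂)∈(0,1)² : y₁² > y₂ and y₁ > (2-y₂)y₂}, and let S be the operator Sf(x) = f(x/y₁) + f((x-y₂)/(1-y₂)) acting on bounded functions ℝ→ℝ. Then for every ε>0 there exist δ>0 and n∈ℕ such that Sⁿ𝟙_{[δ,1-δ]} ≥ 2·𝟙_{[ε,1-ε]} pointwise. -/

import Mathlib

open Set

/-- The transfer-type operator S f(x) = f(x/y₁) + f((x-y₂)/(1-y₂)). -/
noncomputable def zipS (y₁ y₂ : ℝ) (f : ℝ → ℝ) : ℝ → ℝ := fun x =>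
  f (x / y₁) + f ((x - y₂) / (1 - y₂))

noncomputable def zipInd (a b x : ℝ) : ℝ :=
  Set.indicator (Set.Icc a b) (fun _ => (1:ℝ)) x

lemma zipInd_eq (a b x : ℝ) :
    zipInd a b x = if a ≤ x then if x ≤ b then 1 else 0 else 0 := by
  unfold zipInd
  rw [Set.indicator_apply]
  by_cases h1 : a ≤ x <;> by_cases h2 : x ≤ b <;> simp [Set.mem_Icc, h1, h2]

lemma zipInd_exchange (p q r s x : ℝ) (h1 : p ≤ r) (h2 : r ≤ q) (h3 : q ≤ s) :
    zipInd p s x + zipInd r q x = zipInd p q x + zipInd r s x := by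
  simp only [zipInd_eq]
  split_ifs <;> linarith

lemma zipInd_cover (p q m1 m2 r s x : ℝ) (h1 : m1 ≤ q) (h2 : r ≤ m2) :
    zipInd p s x ≤ zipInd p q x + zipInd m1 m2 x + zipInd r s x := by
  simp only [zipInd_eq]
  split_ifs <;> linarith

lemma zipInd_div (y₁ p q x : ℝ) (h : 0 < y₁) :
    zipInd p q (x / y₁) = zipInd (y₁ * p) (y₁ * q) x := by
  have h1 : p ≤ x / y₁ ↔ y₁ * p ≤ x := by rw [le_div_iff₀ h, mul_comm]
  have h2 : x / y₁ ≤ q ↔ x ≤ y₁ * q := by rw [div_le_iff₀ h, mul_comm]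
  simp only [zipInd_eq, h1, h2]

lemma zipInd_aff (y₂ p q x : ℝ) (h : 0 < 1 - y₂) :
    zipInd p q ((x - y₂) / (1 - y₂)) =
      zipInd (y₂ + (1 - y₂) * p) (y₂ + (1 - y₂) * q) x := by
  have h1 : p ≤ (x - y₂) / (1 - y₂) ↔ y₂ + (1 - y₂) * p ≤ x := by
    rw [le_div_iff₀ h]; constructor <;> intro hh <;> nlinarith
  have h2 : (x - y₂) / (1 - y₂) ≤ q ↔ x ≤ y₂ + (1 - y₂) * q := by
    rw [div_le_iff₀ h]; constructor <;> intro hh <;> nlinarith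
  simp only [zipInd_eq, h1, h2]

lemma zipInd_two (e p q r s x : ℝ) (h1 : p ≤ e) (h2 : r ≤ e)
    (h3 : 1 - e ≤ q) (h4 : 1 - e ≤ s) :
    2 * zipInd e (1 - e) x ≤ zipInd p q x + zipInd r s x := by
  simp only [zipInd_eq]
  split_ifs <;> linarith

theorem zipS_doubling (y₁ y₂ : ℝ)
    (hy₁ : y₁ ∈ Ioo (0:ℝ) 1) (hy₂ : y₂ ∈ Ioo (0:ℝ) 1)
    (hB₁ : y₂ < y₁ ^ 2) (hB₂ : (2 - y₂) * y₂ < y₁) :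
    ∀ ε : ℝ, 0 < ε → ∃ δ : ℝ, 0 < δ ∧ ∃ n : ℕ,
      ∀ x : ℝ, 2 * indicator (Icc ε (1 - ε)) (fun _ => (1:ℝ)) x ≤
        (zipS y₁ y₂)^[n] (indicator (Icc δ (1 - δ)) (fun _ => (1:ℝ))) x := by
  obtain ⟨hy₁0, hy₁1⟩ := hy₁
  obtain ⟨hy₂0, hy₂1⟩ := hy₂
  have h2pos : (0:ℝ) < 1 - y₂ := by linarith
  have hsq : y₁ ^ 2 ≤ y₁ := by rw [sq]; exact mul_le_of_le_one_left hy₁0.le hy₁1.le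
  intro ε hε
  -- choose δ
  set δ : ℝ := min (1/2) (min ((y₁^2 - y₂) / (2*(1 + y₁^2)))
      ((y₁ - (2 - y₂)*y₂) / (2*(1 + y₁)))) with hδdef
  have hden1 : (0:ℝ) < 2*(1 + y₁^2) := by positivity
  have hden2 : (0:ℝ) < 2*(1 + y₁) := by positivity
  have hδ0 : 0 < δ := by
    apply lt_min (by norm_num)
    apply lt_min
    · exact div_pos (by linarith) hden1
    · exact div_pos (by linarith) hden2
  have hδhalf : δ ≤ 1/2 := min_le_left _ _
  have hδ1 : δ ≤ 1 := by linarith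
  have hδd2' : δ * (2*(1 + y₁^2)) ≤ y₁^2 - y₂ := by
    rw [← le_div_iff₀ hden1]
    exact le_trans (min_le_right _ _) (min_le_left _ _)
  have hδd3' : δ * (2*(1 + y₁)) ≤ y₁ - (2 - y₂)*y₂ := by
    rw [← le_div_iff₀ hden2]
    exact le_trans (min_le_right _ _) (min_le_right _ _)
  have hd2 : y₂ + (1 - y₂) * δ ≤ y₁^2 * (1 - δ) := by
    have f1 : 0 ≤ δ * y₂ := mul_nonneg hδ0.le hy₂0.le
    have f2 : 0 ≤ δ * y₁^2 := mul_nonneg hδ0.le (sq_nonneg y₁)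
    nlinarith [hδd2', f1, f2]
  have hd1 : y₂ + (1 - y₂) * δ ≤ y₁ * (1 - δ) := by
    have f1 : y₁^2 * (1 - δ) ≤ y₁ * (1 - δ) :=
      mul_le_mul_of_nonneg_right hsq (by linarith)
    linarith [hd2]
  have hd3 : (2 - y₂)*y₂ + (1 - y₂)^2 * δ ≤ y₁ * (1 - δ) := by
    have f1 : 0 ≤ δ * y₂ := mul_nonneg hδ0.le hy₂0.le
    have f2 : 0 ≤ δ * y₁ := mul_nonneg hδ0.le hy₁0.le
    have f3 : δ * y₂^2 ≤ δ * 1 :=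
      mul_le_mul_of_nonneg_left (by nlinarith [sq_nonneg y₂]) hδ0.le
    nlinarith [hδd3', f1, f2, f3]
  -- the two nested interval families
  set a₀ : ℝ := y₂ + (1 - y₂) * δ with ha₀def
  set b₀ : ℝ := y₁ * (1 - δ) with hb₀def
  have ha₀0 : 0 ≤ a₀ := by
    have := mul_nonneg h2pos.le hδ0.le; simp only [ha₀def]; linarith
  have ha₀1 : a₀ ≤ 1 := by
    have := mul_le_of_le_one_right h2pos.le hδ1; simp only [ha₀def]; linarith
  have hb₀0 : 0 ≤ b₀ := mul_nonneg hy₁0.le (by linarith)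
  have hb₀1 : b₀ ≤ 1 := by
    have : y₁ * (1 - δ) ≤ 1 * (1 - δ) := mul_le_mul_of_nonneg_right hy₁1.le (by linarith)
    simp only [hb₀def]; linarith
  set A : ℕ → ℝ := fun k => y₁^(k+1) * δ with hAdef
  set B : ℕ → ℝ := fun k => 1 - (1 - y₂)^(k+1) * δ with hBdef
  set a : ℕ → ℝ := fun k => y₁^k * a₀ with hadef
  set b : ℕ → ℝ := fun k => 1 - (1 - y₂)^k * (1 - b₀) with hbdef
  set f₀ : ℝ → ℝ := indicator (Icc δ (1 - δ)) (fun _ => (1:ℝ)) with hf₀def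
  have hf₀ : ∀ t, f₀ t = zipInd δ (1 - δ) t := fun t => rfl
  -- basic bounds on the sequences
  have hy₁pow : ∀ k : ℕ, 0 ≤ y₁^k ∧ y₁^k ≤ 1 :=
    fun k => ⟨pow_nonneg hy₁0.le k, pow_le_one₀ hy₁0.le hy₁1.le⟩
  have hy₂pow : ∀ k : ℕ, 0 ≤ (1-y₂)^k ∧ (1-y₂)^k ≤ 1 :=
    fun k => ⟨pow_nonneg h2pos.le k, pow_le_one₀ h2pos.le (by linarith)⟩
  have hA0 : ∀ k, 0 ≤ A k := fun k => mul_nonneg (hy₁pow (k+1)).1 hδ0.le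
  have hAδ : ∀ k, A k ≤ δ := fun k => mul_le_of_le_one_left hδ0.le (hy₁pow (k+1)).2
  have hB1 : ∀ k, B k ≤ 1 := fun k => by
    have := mul_nonneg (hy₂pow (k+1)).1 hδ0.le; simp only [hBdef]; linarith
  have hBδ : ∀ k, 1 - δ ≤ B k := fun k => by
    have := mul_le_of_le_one_left hδ0.le (hy₂pow (k+1)).2; simp only [hBdef]; linarith
  have hB0 : ∀ k, 0 ≤ B k := fun k => le_trans (by linarith) (hBδ k)
  have ha0 : ∀ k, 0 ≤ a k := fun k => mul_nonneg (hy₁pow k).1 ha₀0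
  have haa₀ : ∀ k, a k ≤ a₀ := fun k => mul_le_of_le_one_left ha₀0 (hy₁pow k).2
  have hb1 : ∀ k, b k ≤ 1 := fun k => by
    have := mul_nonneg (hy₂pow k).1 (by linarith : (0:ℝ) ≤ 1 - b₀)
    simp only [hbdef]; linarith
  have hbb₀ : ∀ k, b₀ ≤ b k := fun k => by
    have := mul_le_of_le_one_left (by linarith : (0:ℝ) ≤ 1 - b₀) (hy₂pow k).2
    simp only [hbdef]; linarith
  have hAB : ∀ k, A k ≤ B k := fun k => le_trans (le_trans (hAδ k) (by linarith)) (hBδ k)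
  have hab : ∀ k, a k ≤ b k := fun k => le_trans (le_trans (haa₀ k) hd1) (hbb₀ k)
  -- the three chaining conditions, uniform in k
  have hc1 : ∀ k, y₂ + (1 - y₂) * A k ≤ y₁ * B k := fun k => by
    have f1 : (1 - y₂) * A k ≤ (1 - y₂) * δ := mul_le_mul_of_nonneg_left (hAδ k) h2pos.le
    have f2 : y₁ * (1 - δ) ≤ y₁ * B k := mul_le_mul_of_nonneg_left (hBδ k) hy₁0.le
    linarith [hd1]
  have hc2 : ∀ k, y₂ + (1 - y₂) * A k ≤ y₁ * b k := fun k => by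
    have f1 : (1 - y₂) * A k ≤ (1 - y₂) * δ := mul_le_mul_of_nonneg_left (hAδ k) h2pos.le
    have f2 : y₁ * b₀ ≤ y₁ * b k := mul_le_mul_of_nonneg_left (hbb₀ k) hy₁0.le
    have f3 : y₁^2 * (1 - δ) = y₁ * b₀ := by rw [hb₀def]; ring
    linarith [hd2]
  have hc3 : ∀ k, y₂ + (1 - y₂) * a k ≤ y₁ * B k := fun k => by
    have f1 : (1 - y₂) * a k ≤ (1 - y₂) * a₀ := mul_le_mul_of_nonneg_left (haa₀ k) h2pos.le
    have f2 : y₁ * (1 - δ) ≤ y₁ * B k := mul_le_mul_of_nonneg_left (hBδ k) hy₁0.le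
    have f3 : y₂ + (1 - y₂) * a₀ = (2 - y₂)*y₂ + (1 - y₂)^2 * δ := by
      rw [ha₀def]; ring
    linarith [hd3]
  -- main induction
  have main : ∀ k : ℕ, ∀ x : ℝ,
      zipInd (A k) (B k) x + zipInd (a k) (b k) x ≤ (zipS y₁ y₂)^[k+1] f₀ x := by
    intro k
    induction k with
    | zero =>
      intro x
      rw [Function.iterate_one]
      have e : zipS y₁ y₂ f₀ x
          = zipInd (y₁ * δ) (y₁ * (1 - δ)) x
            + zipInd (y₂ + (1 - y₂) * δ) (y₂ + (1 - y₂) * (1 - δ)) x := by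
        show f₀ (x / y₁) + f₀ ((x - y₂) / (1 - y₂)) = _
        rw [hf₀ (x / y₁), hf₀ ((x - y₂) / (1 - y₂)), zipInd_div y₁ δ (1-δ) x hy₁0,
          zipInd_aff y₂ δ (1-δ) x h2pos]
      rw [e]
      have eA : A 0 = y₁ * δ := by simp [hAdef]
      have eB : B 0 = y₂ + (1 - y₂) * (1 - δ) := by simp [hBdef]; ring
      have ea : a 0 = y₂ + (1 - y₂) * δ := by simp [hadef]; exact ha₀def
      have eb : b 0 = y₁ * (1 - δ) := by simp [hbdef]; exact hb₀def
      rw [eA, eB, ea, eb]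
      have g1 : y₁ * δ ≤ y₂ + (1 - y₂) * δ := by
        have f1 : y₁ * δ ≤ δ := mul_le_of_le_one_left hδ0.le hy₁1.le
        have f2 : y₂ * δ ≤ y₂ := mul_le_of_le_one_right hy₂0.le hδ1
        linarith
      have g3 : y₁ * (1 - δ) ≤ y₂ + (1 - y₂) * (1 - δ) := by
        have f1 : y₁ * (1 - δ) ≤ 1 - δ :=
          mul_le_of_le_one_left (by linarith) hy₁1.le
        have f2 : y₂ * (1 - δ) ≤ y₂ := mul_le_of_le_one_right hy₂0.le (by linarith)
        linarith
      rw [zipInd_exchange (y₁ * δ) (y₁ * (1-δ)) (y₂ + (1 - y₂) * δ)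
        (y₂ + (1 - y₂) * (1 - δ)) x g1 hd1 g3]
    | succ k ih =>
      intro x
      rw [Function.iterate_succ_apply']
      have step : (zipS y₁ y₂)^[k+1] f₀ (x / y₁)
            + (zipS y₁ y₂)^[k+1] f₀ ((x - y₂) / (1 - y₂))
          ≥ (zipInd (A k) (B k) (x / y₁) + zipInd (a k) (b k) (x / y₁))
            + (zipInd (A k) (B k) ((x - y₂) / (1 - y₂))
              + zipInd (a k) (b k) ((x - y₂) / (1 - y₂))) :=
        add_le_add (ih (x / y₁)) (ih ((x - y₂) / (1 - y₂)))
      have e0 : zipS y₁ y₂ ((zipS y₁ y₂)^[k+1] f₀) x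
          = (zipS y₁ y₂)^[k+1] f₀ (x / y₁)
            + (zipS y₁ y₂)^[k+1] f₀ ((x - y₂) / (1 - y₂)) := rfl
      rw [e0]
      rw [zipInd_div y₁ (A k) (B k) x hy₁0, zipInd_div y₁ (a k) (b k) x hy₁0,
        zipInd_aff y₂ (A k) (B k) x h2pos, zipInd_aff y₂ (a k) (b k) x h2pos] at step
      -- endpoints of the next step
      have eA : A (k+1) = y₁ * A k := by simp only [hAdef]; ring
      have eB : B (k+1) = y₂ + (1 - y₂) * B k := by simp only [hBdef]; ring
      have ea : a (k+1) = y₁ * a k := by simp only [hadef]; ring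
      have eb : b (k+1) = y₂ + (1 - y₂) * b k := by simp only [hbdef]; ring
      rw [eA, eB, ea, eb]
      have g1 : y₁ * A k ≤ y₂ + (1 - y₂) * A k := by
        have f1 : y₁ * A k ≤ A k := mul_le_of_le_one_left (hA0 k) hy₁1.le
        have f2 : y₂ * A k ≤ y₂ :=
          mul_le_of_le_one_right hy₂0.le (le_trans (hAδ k) hδ1)
        linarith
      have g3 : y₁ * B k ≤ y₂ + (1 - y₂) * B k := by
        have f1 : y₁ * B k ≤ B k := mul_le_of_le_one_left (hB0 k) hy₁1.le
        have f2 : y₂ * B k ≤ y₂ := mul_le_of_le_one_right hy₂0.le (hB1 k)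
        linarith
      have exch := zipInd_exchange (y₁ * A k) (y₁ * B k) (y₂ + (1 - y₂) * A k)
        (y₂ + (1 - y₂) * B k) x g1 (hc1 k) g3
      have cov := zipInd_cover (y₁ * a k) (y₁ * b k) (y₂ + (1 - y₂) * A k) (y₁ * B k)
        (y₂ + (1 - y₂) * a k) (y₂ + (1 - y₂) * b k) x (hc2 k) (hc3 k)
      linarith
  -- choose n large enough
  obtain ⟨n₁, hn₁⟩ := exists_pow_lt_of_lt_one hε hy₁1
  obtain ⟨n₂, hn₂⟩ := exists_pow_lt_of_lt_one hε (by linarith : 1 - y₂ < 1)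
  set k := max n₁ n₂ with hkdef
  have hk1 : y₁^k ≤ y₁^n₁ := pow_le_pow_of_le_one hy₁0.le hy₁1.le (le_max_left _ _)
  have hk2 : (1 - y₂)^k ≤ (1 - y₂)^n₂ :=
    pow_le_pow_of_le_one h2pos.le (by linarith) (le_max_right _ _)
  have hk1' : y₁^(k+1) ≤ y₁^n₁ :=
    pow_le_pow_of_le_one hy₁0.le hy₁1.le (le_trans (le_max_left _ _) (Nat.le_succ _))
  have hk2' : (1 - y₂)^(k+1) ≤ (1 - y₂)^n₂ :=
    pow_le_pow_of_le_one h2pos.le (by linarith) (le_trans (le_max_right _ _) (Nat.le_succ _))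
  refine ⟨δ, hδ0, k + 1, fun x => ?_⟩
  have key := main k x
  have hAε : A k ≤ ε := by
    have f1 : y₁^(k+1) * δ ≤ y₁^(k+1) := mul_le_of_le_one_right (hy₁pow (k+1)).1 hδ1
    have : A k = y₁^(k+1) * δ := rfl
    linarith [hn₁, hk1']
  have haε : a k ≤ ε := by
    have f1 : y₁^k * a₀ ≤ y₁^k := mul_le_of_le_one_right (hy₁pow k).1 ha₀1
    have : a k = y₁^k * a₀ := rfl
    linarith [hn₁, hk1]
  have hBε : 1 - ε ≤ B k := by
    have f1 : (1 - y₂)^(k+1) * δ ≤ (1 - y₂)^(k+1) :=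
      mul_le_of_le_one_right (hy₂pow (k+1)).1 hδ1
    have : B k = 1 - (1 - y₂)^(k+1) * δ := rfl
    linarith [hn₂, hk2']
  have hbε : 1 - ε ≤ b k := by
    have f1 : (1 - y₂)^k * (1 - b₀) ≤ (1 - y₂)^k :=
      mul_le_of_le_one_right (hy₂pow k).1 (by linarith)
    have : b k = 1 - (1 - y₂)^k * (1 - b₀) := rfl
    linarith [hn₂, hk2]
  have lhs : 2 * indicator (Icc ε (1 - ε)) (fun _ => (1:ℝ)) x
      ≤ zipInd (A k) (B k) x + zipInd (a k) (b k) x := by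
    have e : indicator (Icc ε (1 - ε)) (fun _ => (1:ℝ)) x = zipInd ε (1 - ε) x := rfl
    rw [e]
    exact zipInd_two ε (A k) (B k) (a k) (b k) x hAε haε hBε hbε
  exact le_trans lhs key
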